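/- For all integers m ≥ 1 and all sufficiently large k, S_m(k) > α^k where α = sqrt(2^m/(2^m - 1)). That is, there exists a 2-coloring of {1, 2, ..., ⌈α^k⌉} with no monochromatic k-term semi-progression of scope m. -/

import Mathlib

open scoped Classical

/-- `x` is a `k`-term semi-progression of scope `m`. -/
def IsSemiProg (m k : ℕ) (x : ℕ → ℕ) : Prop :=
  ∃ d : ℕ, 1 ≤ d ∧ ∀ j, j + 1 < k → ∃ i, 1 ≤ i ∧ i ≤ m ∧ x (j + 1) = x j + i * d

/-- A 2-coloring of `{1,...,N}`, encoded by the set `A` of elements of the first color,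
contains a monochromatic `k`-term semi-progression of scope `m`. -/
def HasMonoSP (N k m : ℕ) (A : Finset ℕ) : Prop :=
  ∃ x : ℕ → ℕ, (∀ j < k, x j ∈ Finset.Icc 1 N) ∧
    ((∀ j < k, x j ∈ A) ∨ (∀ j < k, x j ∉ A)) ∧ IsSemiProg m k x

/-- `f(N,k,m)`: the number of 2-colorings of `{1,...,N}` containing a monochromatic
`k`-term semi-progression of scope `m`. -/
noncomputable def f (N k m : ℕ) : ℕ :=
  ((Finset.Icc 1 N).powerset.filter (HasMonoSP N k m)).card

/-- `S_m(k)`: least `N` such that every 2-coloring of `{1,...,N}` yields a monochromatic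
`k`-term semi-progression of scope `m`. -/
noncomputable def S (m k : ℕ) : ℕ :=
  sInf {N | ∀ A ∈ (Finset.Icc 1 N).powerset, HasMonoSP N k m A}

def ext (n : ℕ) (g : Fin n → ℕ) : ℕ → ℕ := fun t => if h : t < n then g ⟨t, h⟩ else 0
def psum (n : ℕ) (g : Fin n → ℕ) (j : ℕ) : ℕ := ∑ t ∈ Finset.range j, ext n g t

def Pat (N k : ℕ) (b : Bool) (d x₁ : ℕ) (g : Fin (k-1) → ℕ) (A : Finset ℕ) : Prop :=
  x₁ + d * psum (k-1) g (k-1) ≤ N ∧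
  (∀ j < k, (x₁ + d * psum (k-1) g j ∈ A ↔ b = true)) ∧
  (∀ u ≤ psum (k-1) g (k-1), (∀ j < k, u ≠ psum (k-1) g j) → (x₁ + d * u ∈ A ↔ b = false))

lemma psum_total (n : ℕ) (g : Fin n → ℕ) : psum n g n = ∑ j : Fin n, g j := by
  rw [psum, ← Fin.sum_univ_eq_sum_range]
  apply Finset.sum_congr rfl
  intro j _
  simp [ext, j.isLt]


lemma geom_sum_half (m : ℕ) : (∑ i ∈ Finset.Icc 1 m, ((1:ℝ)/2)^i) = 1 - (1/2)^m := by
  induction m with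
  | zero => simp
  | succ m ih =>
      rw [show Finset.Icc 1 (m+1) = insert (m+1) (Finset.Icc 1 m) by
        ext t; simp [Finset.mem_Icc, Finset.mem_insert]; omega
      , Finset.sum_insert (by simp)]
      rw [ih]; ring


lemma chain_mono {k m : ℕ} {s : ℕ → ℕ}
    (hgap : ∀ j, j + 1 < k → s j < s (j + 1) ∧ s (j + 1) ≤ s j + m) :
    ∀ a b, a ≤ b → b < k → s a ≤ s b ∧ (a < b → s a < s b) := by
  intro a b
  induction b with
  | zero =>
      intro hab _
      have : a = 0 := by omega
      subst this
      exact ⟨le_rfl, fun h => absurd h (lt_irrefl _)⟩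
  | succ b ih =>
      intro hab hbk
      rcases Nat.lt_or_ge a (b+1) with h | h
      · have hab' : a ≤ b := by omega
        have h1 := ih hab' (by omega)
        have h2 := hgap b hbk
        exact ⟨by omega, fun _ => by omega⟩
      · have : a = b + 1 := by omega
        subst this
        exact ⟨le_rfl, fun h => absurd h (lt_irrefl _)⟩


noncomputable def greedy (Q : Set ℕ) : ℕ → ℕ
  | 0 => 0
  | j+1 => sInf {t | t ∈ Q ∧ greedy Q j < t}

lemma greedy_step (Q : Set ℕ) {k m : ℕ} {s : ℕ → ℕ} (h0 : s 0 = 0)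
    (hQ : ∀ j < k, s j ∈ Q)
    (hgap : ∀ j, j + 1 < k → s j < s (j + 1) ∧ s (j + 1) ≤ s j + m)
    {j : ℕ} (hj : j + 1 < k) (hle : greedy Q j ≤ s j) :
    greedy Q (j+1) ∈ Q ∧ greedy Q (j+1) ≤ s (j+1) ∧
      greedy Q j < greedy Q (j+1) ∧ greedy Q (j+1) ≤ greedy Q j + m := by
  set y := greedy Q j with hy
  have hex : ∃ t, t < k ∧ y < s t := ⟨j+1, hj, by
    have := hgap j hj; omega⟩
  set t0 := Nat.find hex with ht0
  obtain ⟨ht0k, ht0y⟩ := Nat.find_spec hex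
  rw [← ht0] at ht0k ht0y
  have ht0pos : t0 ≠ 0 := by
    intro h
    rw [h, h0] at ht0y; omega
  obtain ⟨u, hu⟩ : ∃ u, t0 = u + 1 := ⟨t0 - 1, by omega⟩
  have husmall : ¬ (u < k ∧ y < s u) := Nat.find_min hex (by omega)
  have huk : u < k := by omega
  have hsu : s u ≤ y := by
    by_contra h
    exact husmall ⟨huk, by omega⟩
  have huj : u ≤ j := by
    by_contra h
    have := (chain_mono hgap j u (by omega) huk).2 (by omega)
    omega
  have hst0 : s t0 ≤ y + m := by
    have := (hgap u (by omega)).2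
    rw [hu]; omega
  have hst0j : s t0 ≤ s (j+1) := (chain_mono hgap t0 (j+1) (by omega) hj).1
  have hWne : s t0 ∈ {t | t ∈ Q ∧ y < t} := ⟨hQ t0 ht0k, ht0y⟩
  have hmem := Nat.sInf_mem (⟨s t0, hWne⟩ : Set.Nonempty {t | t ∈ Q ∧ y < t})
  have hle' := Nat.sInf_le hWne
  have hgr : greedy Q (j+1) = sInf {t | t ∈ Q ∧ y < t} := rfl
  rw [hgr]
  exact ⟨hmem.1, by omega, hmem.2, by omega⟩

lemma greedy_invariant (Q : Set ℕ) {k m : ℕ} {s : ℕ → ℕ} (h0 : s 0 = 0)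
    (hQ : ∀ j < k, s j ∈ Q)
    (hgap : ∀ j, j + 1 < k → s j < s (j + 1) ∧ s (j + 1) ≤ s j + m)
    (hk : 1 ≤ k) :
    ∀ j < k, greedy Q j ∈ Q ∧ greedy Q j ≤ s j ∧
      (j + 1 < k → greedy Q j < greedy Q (j+1) ∧ greedy Q (j+1) ≤ greedy Q j + m) := by
  intro j
  induction j with
  | zero =>
      intro hk0
      refine ⟨by simpa [greedy, h0] using hQ 0 hk0, by simp [greedy, h0], ?_⟩
      intro h1
      have := greedy_step Q h0 hQ hgap h1 (by simp [greedy, h0])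
      exact ⟨this.2.2.1, this.2.2.2⟩
  | succ j ih =>
      intro hjk
      have hj : j < k := by omega
      have ihj := ih hj
      have step := greedy_step Q h0 hQ hgap hjk ihj.2.1
      refine ⟨step.1, step.2.1, ?_⟩
      intro h1
      have := greedy_step Q h0 hQ hgap h1 step.2.1
      exact ⟨this.2.2.1, this.2.2.2⟩

lemma greedy_mono (Q : Set ℕ) {k m : ℕ} {s : ℕ → ℕ} (h0 : s 0 = 0)
    (hQ : ∀ j < k, s j ∈ Q)
    (hgap : ∀ j, j + 1 < k → s j < s (j + 1) ∧ s (j + 1) ≤ s j + m)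
    (hk : 1 ≤ k) :
    ∀ a b, a ≤ b → b < k → greedy Q a ≤ greedy Q b := by
  have key := fun j hj => (greedy_invariant Q h0 hQ hgap hk j hj)
  intro a b
  induction b with
  | zero =>
      intro hab _
      have : a = 0 := by omega
      subst this
      exact le_rfl
  | succ b ih =>
      intro hab hbk
      rcases Nat.lt_or_ge a (b+1) with h | h
      · have h1 := ih (by omega) (by omega)
        have h2 := (key b (by omega)).2.2 hbk
        omega
      · have : a = b + 1 := by omega
        subst this
        exact le_rfl

lemma greedy_complete (Q : Set ℕ) {k m : ℕ} {s : ℕ → ℕ} (h0 : s 0 = 0)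
    (hQ : ∀ j < k, s j ∈ Q)
    (hgap : ∀ j, j + 1 < k → s j < s (j + 1) ∧ s (j + 1) ≤ s j + m)
    (hk : 1 ≤ k) :
    ∀ u ∈ Q, u ≤ greedy Q (k-1) → ∃ j < k, u = greedy Q j := by
  intro u hu hule
  have hex : ∃ j, j < k ∧ u ≤ greedy Q j := ⟨k-1, by omega, hule⟩
  set j0 := Nat.find hex with hj0
  obtain ⟨hj0k, hj0le⟩ := Nat.find_spec hex
  rw [← hj0] at hj0k hj0le
  rcases Nat.eq_zero_or_pos j0 with h | h
  · refine ⟨0, by omega, ?_⟩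
    rw [h] at hj0le
    simpa [greedy] using Nat.le_antisymm (by simpa [greedy] using hj0le) (Nat.zero_le u)
  · obtain ⟨i, hi⟩ : ∃ i, j0 = i + 1 := ⟨j0 - 1, by omega⟩
    have hmin : ¬ (i < k ∧ u ≤ greedy Q i) := Nat.find_min hex (by omega)
    have hik : i < k := by omega
    have hgi : greedy Q i < u := by
      by_contra hcon
      exact hmin ⟨hik, by omega⟩
    have : greedy Q (i+1) ≤ u := Nat.sInf_le ⟨hu, hgi⟩
    rw [hi] at hj0le
    refine ⟨j0, hj0k, ?_⟩
    rw [hi]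
    omega

lemma extraction {N k m : ℕ} (hm : 1 ≤ m) (hk : 2 ≤ k) {A : Finset ℕ}
    (h : HasMonoSP N k m A) :
    ∃ (b : Bool) (d x₁ : ℕ) (g : Fin (k-1) → ℕ),
      d ∈ Finset.Icc 1 ((N-1)/(k-1)) ∧ x₁ ∈ Finset.Icc 1 N ∧
      g ∈ Fintype.piFinset (fun _ : Fin (k-1) => Finset.Icc 1 m) ∧ Pat N k b d x₁ g A := by
  obtain ⟨x, hxI, hcolor, d, hd, hstep⟩ := h
  classical
  set i : ℕ → ℕ := fun j => if h : j + 1 < k then (hstep j h).choose else 1 with hi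
  have hi1 : ∀ j, 1 ≤ i j ∧ i j ≤ m := by
    intro j
    by_cases h : j + 1 < k
    · have hsp := (hstep j h).choose_spec
      simp only [hi, h, dif_pos]
      exact ⟨hsp.1, hsp.2.1⟩
    · simp only [hi, h, dif_neg, not_false_iff]
      exact ⟨le_rfl, hm⟩
  have hixd : ∀ j, j + 1 < k → x (j+1) = x j + i j * d := by
    intro j h
    have hsp := (hstep j h).choose_spec
    simp only [hi, h, dif_pos]
    exact hsp.2.2
  set s : ℕ → ℕ := fun j => ∑ t ∈ Finset.range j, i t with hs
  have hs0 : s 0 = 0 := by simp [hs]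
  have hssucc : ∀ j, s (j+1) = s j + i j := by
    intro j; simp [hs, Finset.sum_range_succ]
  have hgap : ∀ j, j + 1 < k → s j < s (j + 1) ∧ s (j + 1) ≤ s j + m := by
    intro j hj
    have := hi1 j
    rw [hssucc]
    omega
  have hxs : ∀ j < k, x j = x 0 + d * s j := by
    intro j
    induction j with
    | zero => intro _; simp [hs0]
    | succ j ih =>
        intro hj
        rw [hixd j hj, ih (by omega), hssucc]
        ring
  set b : Bool := decide (x 0 ∈ A) with hb
  set Q : Set ℕ := {t | x 0 + d * t ∈ A ↔ b = true} with hQdef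
  have hQ : ∀ j < k, s j ∈ Q := by
    intro j hj
    have hx := hxs j hj
    simp only [hQdef, Set.mem_setOf_eq, ← hx]
    rcases hcolor with hin | hout
    · have hb' : b = true := by simp only [hb, decide_eq_true_eq]; exact hin 0 (by omega)
      rw [hb']
      simpa using hin j hj
    · have hb' : b = false := by
        simp only [hb, decide_eq_false_iff_not]; exact hout 0 (by omega)
      rw [hb']
      simp only [Bool.false_eq_true, iff_false]
      exact hout j hj
  have hk1 : 1 ≤ k := by omega
  have inv := greedy_invariant Q hs0 hQ hgap hk1
  set y : ℕ → ℕ := greedy Q with hy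
  set g : Fin (k-1) → ℕ := fun j => y (j.1+1) - y j.1 with hg
  have hpsum : ∀ j ≤ k - 1, psum (k-1) g j = y j := by
    intro j
    induction j with
    | zero => intro _; simp [psum, hy, greedy]
    | succ j ih =>
        intro hj
        have hjlt : j < k - 1 := by omega
        have hrec : psum (k-1) g (j+1) = psum (k-1) g j + ext (k-1) g j := by
          simp [psum, Finset.sum_range_succ]
        have hext : ext (k-1) g j = y (j+1) - y j := by simp [ext, hjlt, hg]
        have hlt : y j < y (j+1) := ((inv j (by omega)).2.2 (by omega)).1
        rw [hrec, hext, ih (by omega)]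
        omega
  have hyk : y (k-1) ≤ s (k-1) := (inv (k-1) (by omega)).2.1
  have hx0 : x 0 ∈ Finset.Icc 1 N := hxI 0 (by omega)
  have hx0' := Finset.mem_Icc.1 hx0
  have hxk' := Finset.mem_Icc.1 (hxI (k-1) (by omega))
  have hT : psum (k-1) g (k-1) = y (k-1) := hpsum (k-1) le_rfl
  have hfit : x 0 + d * y (k-1) ≤ N := by
    have h1 : x 0 + d * s (k-1) ≤ N := by
      rw [← hxs (k-1) (by omega)]; exact hxk'.2
    have hmul : d * y (k-1) ≤ d * s (k-1) := Nat.mul_le_mul_left d hyk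
    omega
  have hyj : ∀ j < k, j ≤ y j := by
    intro j
    induction j with
    | zero => intro _; exact Nat.zero_le _
    | succ j ih =>
        intro hj
        have h1 := ((inv j (by omega)).2.2 hj).1
        have h2 := ih (by omega)
        omega
  have hdk : d * (k - 1) ≤ N - 1 := by
    have h1 : k - 1 ≤ y (k-1) := hyj (k-1) (by omega)
    have h2 : d * (k-1) ≤ d * y (k-1) := Nat.mul_le_mul_left d h1
    omega
  refine ⟨b, d, x 0, g, ?_, hx0, ?_, ?_, ?_, ?_⟩
  · rw [Finset.mem_Icc]
    exact ⟨hd, (Nat.le_div_iff_mul_le (by omega)).2 hdk⟩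
  · rw [Fintype.mem_piFinset]
    intro j
    rw [Finset.mem_Icc]
    have hlt := ((inv j.1 (by omega)).2.2 (by omega))
    simp only [hg]
    omega
  · rw [hT]; exact hfit
  · intro j hj
    rw [hpsum j (by omega)]
    have := (inv j hj).1
    simpa [hQdef] using this
  · intro u hu hne
    have hucomp : u ∉ Q := by
      intro huQ
      rw [hT] at hu
      obtain ⟨j, hjk, hju⟩ := greedy_complete Q hs0 hQ hgap hk1 u huQ hu
      exact hne j hjk (by rw [hpsum j (by omega)]; exact hju)
    simp only [hQdef, Set.mem_setOf_eq] at hucomp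
    rcases Bool.eq_false_or_eq_true b with hbv | hbv <;>
      rw [hbv] at hucomp ⊢ <;> simp at hucomp ⊢ <;> exact hucomp

lemma pat_key {N k : ℕ} {b : Bool} {d x₁ : ℕ} {g : Fin (k-1) → ℕ} {A : Finset ℕ}
    (hP : Pat N k b d x₁ g A) :
    ∀ u ≤ psum (k-1) g (k-1),
      (x₁ + d * u ∈ A ↔ ((b = true) ↔ ∃ j, j < k ∧ u = psum (k-1) g j)) := by
  intro u hu
  by_cases hex : ∃ j, j < k ∧ u = psum (k-1) g j
  · obtain ⟨j, hj, rfl⟩ := hex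
    have h1 := hP.2.1 j hj
    constructor
    · intro hA
      exact ⟨fun _ => ⟨j, hj, rfl⟩, fun _ => h1.1 hA⟩
    · intro h2
      exact h1.2 (h2.2 ⟨j, hj, rfl⟩)
  · have h1 := hP.2.2 u hu (by push_neg at hex; exact fun j hj => hex j hj)
    constructor
    · intro hA
      constructor
      · intro hb
        rw [hb] at h1
        exact absurd (h1.1 hA) (by simp)
      · intro hj
        exact absurd hj hex
    · intro hiff
      rcases Bool.eq_false_or_eq_true b with hbv | hbv
      · exact absurd (hiff.1 hbv) hex
      · rw [hbv] at h1
        exact h1.2 rfl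

lemma card_pat_le {N k : ℕ} (b : Bool) (d x₁ : ℕ) (g : Fin (k-1) → ℕ)
    (hd : 1 ≤ d) (hx : 1 ≤ x₁) :
    ((Finset.Icc 1 N).powerset.filter (Pat N k b d x₁ g)).card
      * 2 ^ (psum (k-1) g (k-1) + 1) ≤ 2 ^ N := by
  classical
  set T := psum (k-1) g (k-1) with hT
  set F := (Finset.Icc 1 N).powerset.filter (Pat N k b d x₁ g) with hF
  rcases F.eq_empty_or_nonempty with hFe | hFne
  · rw [hFe]; simp
  obtain ⟨A0, hA0⟩ := hFne
  have hA0' := Finset.mem_filter.1 hA0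
  have hfit : x₁ + d * T ≤ N := hA0'.2.1
  have hTN : T + 1 ≤ N := by
    have : T ≤ d * T := Nat.le_mul_of_pos_left T (by omega)
    omega
  set J := (Finset.range (T+1)).image (fun u => x₁ + d * u) with hJ
  have hinj : Function.Injective (fun u => x₁ + d * u) := by
    intro a c h
    simp only at h
    have : d * a = d * c := by omega
    exact Nat.eq_of_mul_eq_mul_left (by omega) this
  have hJcard : J.card = T + 1 := by
    rw [hJ, Finset.card_image_of_injective _ hinj, Finset.card_range]
  have hJsub : J ⊆ Finset.Icc 1 N := by
    intro p hp
    rw [hJ, Finset.mem_image] at hp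
    obtain ⟨u, hu, rfl⟩ := hp
    rw [Finset.mem_range] at hu
    rw [Finset.mem_Icc]
    constructor
    · omega
    · have : d * u ≤ d * T := Nat.mul_le_mul_left d (by omega)
      omega
  have hcard : F.card ≤ ((Finset.Icc 1 N) \ J).powerset.card := by
    apply Finset.card_le_card_of_injOn (fun A => A \ J)
    · intro A hA
      rw [Finset.mem_coe, Finset.mem_powerset]
      exact Finset.sdiff_subset_sdiff (Finset.mem_powerset.1 (Finset.mem_filter.1 hA).1) le_rfl
    · intro A1 hA1 A2 hA2 heq
      have heq' : A1 \ J = A2 \ J := heq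
      have hP1 := (Finset.mem_filter.1 hA1).2
      have hP2 := (Finset.mem_filter.1 hA2).2
      ext p
      by_cases hp : p ∈ J
      · rw [hJ, Finset.mem_image] at hp
        obtain ⟨u, hu, rfl⟩ := hp
        rw [Finset.mem_range] at hu
        rw [pat_key hP1 u (by omega), pat_key hP2 u (by omega)]
      · constructor
        · intro h
          have : p ∈ A1 \ J := Finset.mem_sdiff.2 ⟨h, hp⟩
          rw [heq'] at this
          exact (Finset.mem_sdiff.1 this).1
        · intro h
          have : p ∈ A2 \ J := Finset.mem_sdiff.2 ⟨h, hp⟩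
          rw [← heq'] at this
          exact (Finset.mem_sdiff.1 this).1
  have hpow : ((Finset.Icc 1 N) \ J).powerset.card = 2 ^ (N - (T+1)) := by
    rw [Finset.card_powerset, Finset.card_sdiff_of_subset hJsub, hJcard, Nat.card_Icc]
    norm_num
  calc F.card * 2 ^ (T+1) ≤ 2 ^ (N - (T+1)) * 2 ^ (T+1) := by
        apply Nat.mul_le_mul_right
        rw [← hpow]; exact hcard
    _ = 2 ^ N := by rw [← pow_add, Nat.sub_add_cancel hTN]

lemma counting (m k N : ℕ) (hm : 1 ≤ m) (hk : 2 ≤ k) :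
    (f N k m : ℝ) ≤ (((N-1)/(k-1) : ℕ) : ℝ) * N * 2^N * (1 - (1/2)^m)^(k-1) := by
  classical
  set D := (N-1)/(k-1) with hD
  set I : Finset (Bool × ℕ × ℕ × (Fin (k-1) → ℕ)) :=
    (Finset.univ : Finset Bool) ×ˢ (Finset.Icc 1 D ×ˢ (Finset.Icc 1 N ×ˢ
      Fintype.piFinset (fun _ : Fin (k-1) => Finset.Icc 1 m))) with hI
  have hcover : (Finset.Icc 1 N).powerset.filter (HasMonoSP N k m) ⊆
      I.biUnion (fun p => (Finset.Icc 1 N).powerset.filter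
        (Pat N k p.1 p.2.1 p.2.2.1 p.2.2.2)) := by
    intro A hA
    obtain ⟨hA1, hA2⟩ := Finset.mem_filter.1 hA
    obtain ⟨b, d, x₁, g, hdI, hxI, hgI, hPat⟩ := extraction hm hk hA2
    apply Finset.mem_biUnion.2
    refine ⟨(b, d, x₁, g), ?_, Finset.mem_filter.2 ⟨hA1, hPat⟩⟩
    rw [hI]
    simp only [Finset.mem_product, Finset.mem_univ, true_and]
    exact ⟨hdI, hxI, hgI⟩
  have hcard : f N k m ≤ ∑ p ∈ I,
      ((Finset.Icc 1 N).powerset.filter (Pat N k p.1 p.2.1 p.2.2.1 p.2.2.2)).card :=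
    le_trans (Finset.card_le_card hcover) Finset.card_biUnion_le
  have hterm : ∀ p ∈ I,
      ((((Finset.Icc 1 N).powerset.filter (Pat N k p.1 p.2.1 p.2.2.1 p.2.2.2)).card : ℝ))
      ≤ 2^N * ((1:ℝ)/2) * ∏ j : Fin (k-1), ((1:ℝ)/2)^(p.2.2.2 j) := by
    rintro ⟨b, d, x₁, g⟩ hp
    rw [hI] at hp
    simp only [Finset.mem_product, Finset.mem_univ, true_and, Finset.mem_Icc,
      Fintype.mem_piFinset] at hp
    obtain ⟨⟨hd1, _⟩, ⟨hx1, _⟩, _⟩ := hp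
    have hnat := card_pat_le (N := N) b d x₁ g hd1 hx1
    set T := psum (k-1) g (k-1) with hT
    have hreal : ((((Finset.Icc 1 N).powerset.filter (Pat N k b d x₁ g)).card : ℝ))
        * 2^(T+1) ≤ 2^N := by
      have := (Nat.cast_le (α := ℝ)).2 hnat
      push_cast at this
      convert this using 2 <;> norm_num
    have h2pos : (0:ℝ) < 2^(T+1) := by positivity
    have hdiv := (le_div_iff₀ h2pos).2 hreal
    calc ((((Finset.Icc 1 N).powerset.filter (Pat N k b d x₁ g)).card : ℝ))
        ≤ 2^N / 2^(T+1) := hdiv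
      _ = 2^N * ((1:ℝ)/2)^(T+1) := by
          rw [div_pow, one_pow, div_eq_mul_inv, div_eq_mul_inv, one_mul]
      _ = 2^N * ((1:ℝ)/2) * ((1:ℝ)/2)^T := by rw [pow_succ]; ring
      _ = 2^N * ((1:ℝ)/2) * ∏ j : Fin (k-1), ((1:ℝ)/2)^(g j) := by
          rw [hT, psum_total, ← Finset.prod_pow_eq_pow_sum]
  have hsum2 : ∑ g ∈ Fintype.piFinset (fun _ : Fin (k-1) => Finset.Icc 1 m),
      ∏ j : Fin (k-1), ((1:ℝ)/2)^(g j) = (1 - (1/2:ℝ)^m)^(k-1) := by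
    rw [← Finset.prod_univ_sum]
    have : ∀ j : Fin (k-1), ∑ i ∈ Finset.Icc 1 m, ((1:ℝ)/2)^i = 1 - (1/2:ℝ)^m :=
      fun _ => geom_sum_half m
    rw [Finset.prod_congr rfl (fun j _ => this j), Finset.prod_const, Finset.card_univ,
      Fintype.card_fin]
  calc (f N k m : ℝ)
      ≤ ∑ p ∈ I, ((((Finset.Icc 1 N).powerset.filter
          (Pat N k p.1 p.2.1 p.2.2.1 p.2.2.2)).card : ℝ)) := by
        exact_mod_cast hcard
    _ ≤ ∑ p ∈ I, (2^N * ((1:ℝ)/2) * ∏ j : Fin (k-1), ((1:ℝ)/2)^(p.2.2.2 j)) :=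
        Finset.sum_le_sum hterm
    _ = (D : ℝ) * N * 2^N * (1 - (1/2)^m)^(k-1) := by
        rw [hI]
        simp only [Finset.sum_product]
        have hinner : ∑ g ∈ Fintype.piFinset (fun _ : Fin (k-1) => Finset.Icc 1 m),
            (2^N * ((1:ℝ)/2) * ∏ j : Fin (k-1), ((1:ℝ)/2)^(g j))
            = 2^N * ((1:ℝ)/2) * (1 - (1/2:ℝ)^m)^(k-1) := by
          rw [← Finset.mul_sum, hsum2]
        calc ∑ _b ∈ (Finset.univ : Finset Bool), ∑ _d ∈ Finset.Icc 1 D,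
              ∑ _x ∈ Finset.Icc 1 N,
              ∑ g ∈ Fintype.piFinset (fun _ : Fin (k-1) => Finset.Icc 1 m),
              (2^N * ((1:ℝ)/2) * ∏ j : Fin (k-1), ((1:ℝ)/2)^((g : Fin (k-1) → ℕ) j))
            = ∑ _b ∈ (Finset.univ : Finset Bool), ∑ _d ∈ Finset.Icc 1 D,
              ∑ _x ∈ Finset.Icc 1 N, (2^N * ((1:ℝ)/2) * (1 - (1/2:ℝ)^m)^(k-1)) := by
              refine Finset.sum_congr rfl (fun _ _ => ?_)
              refine Finset.sum_congr rfl (fun _ _ => ?_)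
              refine Finset.sum_congr rfl (fun _ _ => ?_)
              exact hinner
          _ = (D : ℝ) * N * 2^N * (1 - (1/2)^m)^(k-1) := by
              simp only [Finset.sum_const, Finset.card_univ, Fintype.card_bool,
                Nat.card_Icc, Nat.add_sub_cancel, smul_eq_mul, nsmul_eq_mul]
              push_cast
              ring

lemma HasMonoSP.mono {N N' k m : ℕ} {A A' : Finset ℕ} (hNN : N' ≤ N)
    (hiff : ∀ x ∈ Finset.Icc 1 N', (x ∈ A' ↔ x ∈ A)) (h : HasMonoSP N' k m A') :
    HasMonoSP N k m A := by
  obtain ⟨x, hI, hc, hsp⟩ := h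
  refine ⟨x, fun j hj => ?_, ?_, hsp⟩
  · have := hI j hj
    rw [Finset.mem_Icc] at this ⊢
    omega
  · rcases hc with hin | hout
    · exact Or.inl (fun j hj => (hiff (x j) (hI j hj)).1 (hin j hj))
    · refine Or.inr (fun j hj hmem => hout j hj ?_)
      exact (hiff (x j) (hI j hj)).2 hmem


lemma SPset_nonempty (m k : ℕ) (hm : 1 ≤ m) (hk : 1 ≤ k) :
    {N | ∀ A ∈ (Finset.Icc 1 N).powerset, HasMonoSP N k m A}.Nonempty := by
  classical
  by_contra hemp
  rw [Set.not_nonempty_iff_eq_empty] at hemp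
  have hbad : ∀ N : ℕ, ∃ A ∈ (Finset.Icc 1 N).powerset, ¬ HasMonoSP N k m A := by
    intro N
    by_contra h
    push_neg at h
    have hN : N ∈ {N | ∀ A ∈ (Finset.Icc 1 N).powerset, HasMonoSP N k m A} :=
      fun A hA => h A hA
    rw [hemp] at hN
    exact hN
  set V : ℕ → Set (ℕ → Bool) := fun N =>
    {C | ¬ HasMonoSP N k m ((Finset.Icc 1 N).filter (fun n => C n = true))} with hV
  have hVclosed : ∀ N, IsClosed (V N) := by
    intro N
    have heq : V N = (fun C : ℕ → Bool => fun i : Fin (N+1) => C i.1) ⁻¹'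
        {D : Fin (N+1) → Bool | ¬ HasMonoSP N k m
          ((Finset.Icc 1 N).filter (fun n => ∀ h : n < N + 1, D ⟨n, h⟩ = true))} := by
      ext C
      simp only [hV, Set.mem_preimage, Set.mem_setOf_eq]
      have : (Finset.Icc 1 N).filter (fun n => C n = true)
          = (Finset.Icc 1 N).filter (fun n => ∀ h : n < N + 1, C n = true) := by
        apply Finset.filter_congr
        intro n hn
        rw [Finset.mem_Icc] at hn
        constructor
        · intro h _; exact h
        · intro h; exact h (by omega)
      rw [this]
    rw [heq]
    haveI : DiscreteTopology (Fin (N+1) → Bool) := Pi.discreteTopology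
    exact IsClosed.preimage (continuous_pi fun i => continuous_apply (i.1 : ℕ))
      (isClosed_discrete _)
  have hVdec : ∀ n, V (n+1) ⊆ V n := by
    intro n C hC hbadC
    apply hC
    apply HasMonoSP.mono (Nat.le_succ n) _ hbadC
    intro t ht
    rw [Finset.mem_Icc] at ht
    simp only [Finset.mem_filter, Finset.mem_Icc]
    constructor
    · intro h; exact ⟨⟨h.1.1, by omega⟩, h.2⟩
    · intro h; exact ⟨⟨h.1.1, ht.2⟩, h.2⟩
  have hVne : ∀ n, (V n).Nonempty := by
    intro n
    obtain ⟨A, hA, hbadA⟩ := hbad n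
    refine ⟨fun t => decide (t ∈ A), ?_⟩
    simp only [hV, Set.mem_setOf_eq]
    have : (Finset.Icc 1 n).filter (fun t => decide (t ∈ A) = true) = A := by
      ext t
      simp only [Finset.mem_filter, decide_eq_true_eq]
      constructor
      · intro h; exact h.2
      · intro h; exact ⟨Finset.mem_powerset.1 hA h, h⟩
    rw [this]
    exact hbadA
  obtain ⟨C, hC⟩ := IsCompact.nonempty_iInter_of_sequence_nonempty_isCompact_isClosed V
    hVdec hVne ((hVclosed 0).isCompact) hVclosed
  obtain ⟨a, ha, b, c, hc⟩ :=
    Combinatorics.exists_mono_homothetic_copy (Finset.range k) (fun n => C (n+1))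
  set N₀ := a * (k-1) + b + 1 with hN₀
  have hCV : C ∈ V N₀ := Set.mem_iInter.1 hC N₀
  have hx : ∀ j < k, a * j + b + 1 ∈ Finset.Icc 1 N₀ := by
    intro j hj
    rw [Finset.mem_Icc]
    have h1 : a * j ≤ a * (k-1) := Nat.mul_le_mul_left a (by omega)
    omega
  have hcol : ∀ j < k, C (a * j + b + 1) = c := by
    intro j hj
    have := hc j (Finset.mem_range.2 hj)
    simpa [smul_eq_mul, Nat.add_assoc] using this
  apply hCV
  refine ⟨fun j => a * j + b + 1, fun j hj => hx j hj, ?_, a, by omega, ?_⟩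
  · rcases Bool.eq_false_or_eq_true c with hcv | hcv
    · refine Or.inl (fun j hj => ?_)
      show a * j + b + 1 ∈ (Finset.Icc 1 N₀).filter (fun n => C n = true)
      rw [Finset.mem_filter, hcol j hj, hcv]
      exact ⟨hx j hj, rfl⟩
    · refine Or.inr (fun j hj hmem => ?_)
      have hmem' : a * j + b + 1 ∈ (Finset.Icc 1 N₀).filter (fun n => C n = true) := hmem
      rw [Finset.mem_filter, hcol j hj, hcv] at hmem'
      exact absurd hmem'.2 (by simp)
  · intro j hj
    refine ⟨1, le_rfl, hm, ?_⟩
    show a * (j+1) + b + 1 = (a * j + b + 1) + 1 * a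
    ring

set_option maxHeartbeats 2000000 in
/-- For every `m ≥ 1` and all sufficiently large `k`, `S_m(k) > α^k` where
`α = √(2^m/(2^m - 1))`; that is, there is a 2-coloring of `{1, ..., ⌈α^k⌉}` with no
monochromatic `k`-term semi-progression of scope `m`. -/
theorem S_exponential_lower_bound (m : ℕ) (hm : 1 ≤ m) :
    ∃ K : ℕ, ∀ k, K ≤ k →
      (Real.sqrt ((2 : ℝ) ^ m / ((2 : ℝ) ^ m - 1))) ^ k < (S m k : ℝ) ∧
      ∃ A ∈ (Finset.Icc 1
          ⌈(Real.sqrt ((2 : ℝ) ^ m / ((2 : ℝ) ^ m - 1))) ^ k⌉₊).powerset,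
        ¬ HasMonoSP ⌈(Real.sqrt ((2 : ℝ) ^ m / ((2 : ℝ) ^ m - 1))) ^ k⌉₊ k m A := by
  refine ⟨10, fun k hk => ?_⟩
  have hk2 : 2 ≤ k := by omega
  set r : ℝ := (2:ℝ)^m / ((2:ℝ)^m - 1) with hr
  set α : ℝ := Real.sqrt r with hα
  have h2m : (2:ℝ) ≤ 2^m := by
    calc (2:ℝ) = 2^1 := (pow_one 2).symm
    _ ≤ 2^m := pow_le_pow_right₀ one_le_two hm
  have h2m1 : (1:ℝ) ≤ 2^m - 1 := by linarith
  have hrpos : 0 < r := div_pos (by linarith) (by linarith)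
  have hr1 : 1 ≤ r := (one_le_div (by linarith)).2 (by linarith)
  have hr2 : r ≤ 2 := by rw [hr, div_le_iff₀ (by linarith)]; linarith
  have hα0 : 0 ≤ α := Real.sqrt_nonneg r
  have hα2 : α^2 = r := Real.sq_sqrt (le_of_lt hrpos)
  have hα1 : 1 ≤ α := by
    rw [hα, show (1:ℝ) = Real.sqrt 1 by simp]
    exact Real.sqrt_le_sqrt hr1
  have hαk1 : 1 ≤ α^k := by
    calc (1:ℝ) = 1^k := (one_pow k).symm
    _ ≤ α^k := pow_le_pow_left₀ (by norm_num) hα1 k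
  set N := ⌈α ^ k⌉₊ with hN
  have hN1 : 1 ≤ N := Nat.ceil_pos.2 (by linarith)
  have hNle : (N:ℝ) ≤ 2 * α^k := by
    have h := Nat.ceil_lt_add_one (a := α^k) (by linarith)
    rw [← hN] at h
    linarith
  have hNk : α^k ≤ (N:ℝ) := Nat.le_ceil _
  have hq : (1 - (1/2:ℝ)^m) = r⁻¹ := by
    rw [hr, inv_div, div_pow, one_pow]
    field_simp
  -- counting bound
  set D := (N-1)/(k-1) with hD
  have hcount := counting m k N hm hk2
  have hDk : (D:ℝ) * ((k:ℝ)-1) ≤ (N:ℝ) := by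
    have h1 : D * (k-1) ≤ N := le_trans (Nat.div_mul_le_self _ _) (by omega)
    have h2 : ((D * (k-1) : ℕ) : ℝ) ≤ (N:ℝ) := by exact_mod_cast h1
    push_cast [Nat.cast_sub (by omega : 1 ≤ k)] at h2
    linarith
  have hk9 : (9:ℝ) ≤ (k:ℝ) - 1 := by
    have : (10:ℝ) ≤ (k:ℝ) := by exact_mod_cast hk
    linarith
  have hrk1pos : (0:ℝ) < r^(k-1) := pow_pos hrpos (k-1)
  have hNN : (N:ℝ) * N ≤ 4 * r^k := by
    have h1 : (N:ℝ) * N ≤ (2*α^k) * (2*α^k) :=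
      mul_le_mul hNle hNle (Nat.cast_nonneg N) (by positivity)
    have h2 : (α^k)^2 = r^k := by rw [pow_right_comm, hα2]
    nlinarith [h1, h2]
  have hrk : r^k = r^(k-1) * r := by
    rw [← pow_succ]
    congr 1
    omega
  have hDNlt : (D:ℝ) * N < r^(k-1) := by
    have h1 : ((k:ℝ)-1) * ((D:ℝ) * N) ≤ (N:ℝ) * N := by
      have := mul_le_mul_of_nonneg_right hDk (Nat.cast_nonneg (α := ℝ) N)
      linarith
    have h2 : (N:ℝ) * N ≤ 8 * r^(k-1) := by
      have := mul_le_mul_of_nonneg_left hr2 (le_of_lt hrk1pos)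
      linarith
    have h3 : (0:ℝ) ≤ (D:ℝ) * N := by positivity
    have h4 : (9:ℝ) * ((D:ℝ) * N) ≤ ((k:ℝ)-1) * ((D:ℝ) * N) :=
      mul_le_mul_of_nonneg_right hk9 h3
    linarith
  have hkey : (D:ℝ) * N * (1 - (1/2:ℝ)^m)^(k-1) < 1 := by
    rw [hq, inv_pow]
    rw [mul_inv_lt_iff₀ hrk1pos, one_mul]
    exact hDNlt
  have hflt : (f N k m : ℝ) < 2^N := by
    have h2Npos : (0:ℝ) < 2^N := by positivity
    calc (f N k m : ℝ) ≤ (D:ℝ) * N * 2^N * (1 - (1/2:ℝ)^m)^(k-1) := hcount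
      _ = ((D:ℝ) * N * (1 - (1/2:ℝ)^m)^(k-1)) * 2^N := by ring
      _ < 1 * 2^N := by
          apply mul_lt_mul_of_pos_right hkey h2Npos
      _ = 2^N := one_mul _
  have hfnat : f N k m < 2^N := by exact_mod_cast hflt
  have hgood : ∃ A ∈ (Finset.Icc 1 N).powerset, ¬ HasMonoSP N k m A := by
    by_contra h
    push_neg at h
    have heq : (Finset.Icc 1 N).powerset.filter (HasMonoSP N k m)
        = (Finset.Icc 1 N).powerset := Finset.filter_true_of_mem (fun A hA => h A hA)
    have : f N k m = 2^N := by
      rw [f, heq, Finset.card_powerset, Nat.card_Icc, Nat.add_sub_cancel]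
    omega
  obtain ⟨A, hAp, hAbad⟩ := hgood
  have hSP := SPset_nonempty m k hm (by omega)
  have hmem : S m k ∈ {N | ∀ A ∈ (Finset.Icc 1 N).powerset, HasMonoSP N k m A} :=
    Nat.sInf_mem hSP
  have hNS : N < S m k := by
    by_contra hle
    push_neg at hle
    have hMS : HasMonoSP (S m k) k m (A ∩ Finset.Icc 1 (S m k)) :=
      hmem (A ∩ Finset.Icc 1 (S m k))
        (Finset.mem_powerset.2 Finset.inter_subset_right)
    apply hAbad
    apply HasMonoSP.mono hle _ hMS
    intro t ht
    simp only [Finset.mem_inter]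
    exact ⟨fun h => h.1, fun h => ⟨h, ht⟩⟩
  refine ⟨?_, A, hAp, hAbad⟩
  calc α^k ≤ (N:ℝ) := hNk
    _ < (S m k : ℝ) := by exact_mod_cast hNS
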